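/- Let V be an n-dimensional real vector space equipped with data (γ, ℓ, ℓ⁽²⁾, P, n, n⁽²⁾) satisfying the four contraction identities, with n⁽²⁾ = 0. Let {n, e₂, …, e_n} be a basis of V whose first vector is n, and let {q, θ², …, θⁿ} be the dual basis (so q(n)=1, q(e_A)=0, θ^A(n)=0, θ^A(e_B)=δ^A_B). Set ψ_A := ℓ(e_A) and 𝔥_{AB} := γ(e_A, e_B) for A,B ∈ {2,…,n}. Then the matrix (𝔥_{AB}) is invertible, γ decomposes as γ = Σ_{A,B} 𝔥_{AB} θ^A ⊗ θ^B, and, denoting by (𝔥^{AB}) the inverse matrix, P decomposes as P = Σ_{A,B} 𝔥^{AB} e_A ⊗ e_B − Σ_{A,B} 𝔥^{AB} ψ_B (n ⊗ e_A + e_A ⊗ n) − (ℓ⁽²⁾ − Σ_{A,B} 𝔥^{AB} ψ_A ψ_B) n ⊗ n, where vectors of V are regarded as linear functionals on V* so that both sides are bilinear forms on V*. -/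

import Mathlib

open Module

/-- The vector of `V` corresponding to `P(ρ,·) ∈ V**`, via the canonical
identification `V ≅ V**`. -/
noncomputable def Pvec {V : Type*} [AddCommGroup V] [Module ℝ V] [FiniteDimensional ℝ V]
    (P : LinearMap.BilinForm ℝ (Module.Dual ℝ V)) (ρ : Module.Dual ℝ V) : V :=
  (Module.evalEquiv ℝ V).symm (P ρ)

/-- Decomposition of `γ` and `P` for null hypersurface data in a basis `{n, e_A}` with dual
basis `{q, θ^A}`: the matrix `𝔥_{AB} = γ(e_A,e_B)` is invertible,
`γ = 𝔥_{AB} θ^A ⊗ θ^B` and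
`P = 𝔥^{AB} e_A ⊗ e_B − 𝔥^{AB} ψ_B (n ⊗ e_A + e_A ⊗ n) − (ℓ⁽²⁾ − 𝔥^{AB} ψ_A ψ_B) n ⊗ n`. -/
theorem gamma_P_decomposition {V : Type*} [AddCommGroup V] [Module ℝ V]
    [FiniteDimensional ℝ V]
    {ι : Type*} [Fintype ι] [DecidableEq ι]
    (γ : LinearMap.BilinForm ℝ V) (hγsym : ∀ X Y : V, γ X Y = γ Y X)
    (ℓ : Module.Dual ℝ V) (ℓ2 : ℝ)
    (P : LinearMap.BilinForm ℝ (Module.Dual ℝ V)) (hPsym : ∀ α β, P α β = P β α)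
    (n : V) (n2 : ℝ) (hn2 : n2 = 0)
    (h1 : γ n + n2 • ℓ = 0)
    (h2 : ℓ n + n2 * ℓ2 = 1)
    (h3 : Pvec P ℓ + ℓ2 • n = 0)
    (h4 : ∀ X : V, Pvec P (γ X) + ℓ X • n = X)
    (b : Basis (Option ι) ℝ V) (hb : b none = n)
    (ψ : ι → ℝ) (hψ : ∀ A, ψ A = ℓ (b (some A)))
    (H : Matrix ι ι ℝ) (hH : ∀ A B, H A B = γ (b (some A)) (b (some B))) :
    IsUnit H ∧
    (∀ X Y : V, γ X Y =
      ∑ A : ι, ∑ B : ι, H A B * (b.coord (some A) X) * (b.coord (some B) Y)) ∧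
    (∀ α β : Module.Dual ℝ V, P α β =
      (∑ A : ι, ∑ B : ι, H⁻¹ A B * α (b (some A)) * β (b (some B)))
      - (∑ A : ι, ∑ B : ι, H⁻¹ A B * ψ B * (α n * β (b (some A)) + α (b (some A)) * β n))
      - (ℓ2 - ∑ A : ι, ∑ B : ι, H⁻¹ A B * ψ A * ψ B) * (α n * β n)) := by
  subst hn2
  rw [zero_smul, add_zero] at h1
  rw [zero_mul, add_zero] at h2
  -- basic consequences
  have hγn : ∀ Y : V, γ n Y = 0 := fun Y => by rw [h1]; rfl
  have hγn' : ∀ Y : V, γ Y n = 0 := fun Y => by rw [hγsym, hγn]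
  have hPv : ∀ (ρ φ : Module.Dual ℝ V), φ (Pvec P ρ) = P ρ φ := by
    intro ρ φ
    exact Module.apply_evalEquiv_symm_apply ℝ V φ (P ρ)
  have h4' : ∀ (X : V) (φ : Module.Dual ℝ V), P (γ X) φ = φ X - ℓ X * φ n := by
    intro X φ
    have h := congrArg φ (h4 X)
    rw [map_add, map_smul, hPv, smul_eq_mul] at h
    linarith
  have h3' : ∀ φ : Module.Dual ℝ V, P ℓ φ = -(ℓ2 * φ n) := by
    intro φ
    have h := congrArg φ h3
    rw [map_add, map_smul, hPv, map_zero, smul_eq_mul] at h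
    linarith
  have hθ : ∀ i j : Option ι, b.coord i (b j) = if i = j then 1 else 0 := by
    intro i j
    simp [Basis.coord_apply, Basis.repr_self, Finsupp.single_apply, eq_comm]
  have hθsn : ∀ B : ι, b.coord (some B) (b none) = 0 := by
    intro B; rw [hθ]; simp
  have hθss : ∀ B C : ι, b.coord (some B) (b (some C)) = if B = C then 1 else 0 := by
    intro B C; rw [hθ]; simp
  have hθns : ∀ B : ι, b.coord none (b (some B)) = 0 := by
    intro B; rw [hθ]; simp
  have hθnn : b.coord none (b none) = 1 := by rw [hθ]; simp
  have hθn : ∀ A : ι, b.coord (some A) n = 0 := by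
    intro A; rw [← hb]; exact hθsn A
  have hqn : b.coord none n = 1 := by rw [← hb]; exact hθnn
  -- expansion of γ(e_A)
  have hgammaA : ∀ A : ι, γ (b (some A)) = ∑ B : ι, H A B • b.coord (some B) := by
    intro A
    apply b.ext
    intro i
    rw [LinearMap.sum_apply]
    cases i with
    | none =>
        simp only [LinearMap.smul_apply, hb, hθn, smul_eq_mul, mul_zero,
          Finset.sum_const_zero, hγn']
    | some C =>
        simp only [LinearMap.smul_apply, hθss, smul_eq_mul, mul_ite, mul_one, mul_zero]
        rw [Finset.sum_ite_eq' Finset.univ C (fun B => H A B)]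
        simp [hH]
  have key : ∀ (A : ι) (φ : Module.Dual ℝ V),
      ∑ B : ι, H A B * P (b.coord (some B)) φ
        = φ (b (some A)) - ℓ (b (some A)) * φ n := by
    intro A φ
    have h := h4' (b (some A)) φ
    rw [hgammaA A] at h
    rw [map_sum, LinearMap.sum_apply] at h
    simpa [smul_eq_mul] using h
  set K : Matrix ι ι ℝ := fun A B => P (b.coord (some A)) (b.coord (some B)) with hK
  have hHK : H * K = 1 := by
    ext A C
    rw [Matrix.mul_apply]
    have h := key A (b.coord (some C))
    rw [hθss, hθn] at h
    simp only [hK] at h ⊢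
    rw [h]
    simp [Matrix.one_apply, eq_comm]
  have hunit : IsUnit H := IsUnit.of_mul_eq_one K hHK
  have hKH : K * H = 1 := mul_eq_one_comm.mp hHK
  have hinv : H⁻¹ = K := Matrix.inv_eq_right_inv hHK
  refine ⟨hunit, ?_, ?_⟩
  · -- γ decomposition
    intro X Y
    have e1 : γ X Y = ∑ i : Option ι, b.repr X i * γ (b i) Y := by
      conv_lhs => rw [← b.sum_repr X]
      rw [map_sum, LinearMap.sum_apply]
      simp [smul_eq_mul]
    have e2 : ∀ i, γ (b i) Y = ∑ j : Option ι, b.repr Y j * γ (b i) (b j) := by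
      intro i
      conv_lhs => rw [← b.sum_repr Y]
      rw [map_sum]
      simp [smul_eq_mul]
    rw [e1]
    simp only [e2]
    rw [Fintype.sum_option]
    simp only [hb, hγn, mul_zero, Finset.sum_const_zero, zero_add]
    refine Finset.sum_congr rfl fun A _ => ?_
    rw [Fintype.sum_option]
    simp only [hb, hγn', mul_zero, zero_add]
    rw [Finset.mul_sum]
    refine Finset.sum_congr rfl fun B _ => ?_
    rw [hH, Basis.coord_apply, Basis.coord_apply]
    ring
  · -- P decomposition
    have hPθq : ∀ A : ι, P (b.coord (some A)) (b.coord none) = -(∑ B : ι, K A B * ψ B) := by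
      intro A
      have e : ∀ B : ι, ∑ C : ι, H B C * P (b.coord (some C)) (b.coord none) = -(ψ B) := by
        intro B
        have hk := key B (b.coord none)
        rw [hqn, hθns, ← hψ] at hk
        rw [hk]; ring
      calc P (b.coord (some A)) (b.coord none)
          = ∑ B : ι, (1 : Matrix ι ι ℝ) A B * P (b.coord (some B)) (b.coord none) := by
            simp [Matrix.one_apply]
        _ = ∑ B : ι, (K * H) A B * P (b.coord (some B)) (b.coord none) := by rw [hKH]
        _ = ∑ B : ι, K A B * -(ψ B) := by
            simp only [Matrix.mul_apply, Finset.sum_mul]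
            rw [Finset.sum_comm]
            refine Finset.sum_congr rfl fun C _ => ?_
            rw [← e C, Finset.mul_sum]
            exact Finset.sum_congr rfl fun B _ => by ring
        _ = -(∑ B : ι, K A B * ψ B) := by
            rw [← Finset.sum_neg_distrib]
            exact Finset.sum_congr rfl fun B _ => by ring
    have hPqθ : ∀ B : ι, P (b.coord none) (b.coord (some B)) = -(∑ A : ι, K B A * ψ A) := by
      intro B; rw [hPsym]; exact hPθq B
    -- expansion of ℓ
    have hℓexp : ℓ = b.coord none + ∑ A : ι, ψ A • b.coord (some A) := by
      apply b.ext
      intro i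
      rw [LinearMap.add_apply, LinearMap.sum_apply]
      cases i with
      | none =>
          simp only [LinearMap.smul_apply, hb, hqn, hθn, smul_eq_mul, mul_zero,
            Finset.sum_const_zero, h2, add_zero]
      | some C =>
          simp only [LinearMap.smul_apply, hθss, smul_eq_mul, mul_ite, mul_one, mul_zero,
            hθns, zero_add]
          rw [Finset.sum_ite_eq' Finset.univ C (fun A => ψ A)]
          simp [hψ]
    have hPqq : P (b.coord none) (b.coord none)
        = -ℓ2 + ∑ A : ι, ∑ B : ι, K A B * ψ A * ψ B := by
      have h := h3' (b.coord none)
      rw [hqn, mul_one] at h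
      rw [hℓexp, map_add, LinearMap.add_apply, map_sum, LinearMap.sum_apply] at h
      simp only [map_smul, LinearMap.smul_apply, smul_eq_mul, hPθq] at h
      have e : ∑ A : ι, ψ A * -(∑ B : ι, K A B * ψ B)
          = -∑ A : ι, ∑ B : ι, K A B * ψ A * ψ B := by
        rw [← Finset.sum_neg_distrib]
        refine Finset.sum_congr rfl fun A _ => ?_
        rw [mul_neg, ← Finset.sum_neg_distrib, Finset.mul_sum, ← Finset.sum_neg_distrib]
        exact Finset.sum_congr rfl fun B _ => by ring
      rw [e] at h
      linarith
    -- bilinear double expansion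
    have hbil : ∀ (c d : Option ι → ℝ),
        P (∑ i, c i • b.coord i) (∑ j, d j • b.coord j)
          = ∑ i, ∑ j, c i * d j * P (b.coord i) (b.coord j) := by
      intro c d
      simp only [map_sum, map_smul, LinearMap.sum_apply, LinearMap.smul_apply, smul_eq_mul]
      rw [Finset.sum_comm]
      refine Finset.sum_congr rfl fun i _ => ?_
      rw [Finset.mul_sum]
      exact Finset.sum_congr rfl fun j _ => by ring
    intro α β
    have e0 : P α β = ∑ i, ∑ j, α (b i) * β (b j) * P (b.coord i) (b.coord j) := by
      conv_lhs => rw [← b.sum_dual_apply_smul_coord α, ← b.sum_dual_apply_smul_coord β]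
      exact hbil _ _
    rw [e0, hinv, ← hb]
    simp only [Fintype.sum_option, Finset.sum_add_distrib, hPqq, hPθq, hPqθ, hK]
    -- now a pure algebra identity in real sums
    simp only [Finset.mul_sum, Finset.sum_mul, mul_neg, neg_mul, Finset.sum_neg_distrib,
      mul_add, add_mul, sub_mul, mul_sub, sub_eq_add_neg, neg_add, neg_neg,
      Finset.sum_add_distrib]
    have sc : ∀ f g : ι → ι → ℝ, (∀ x y, f x y = g x y) →
        (∑ x : ι, ∑ y : ι, f x y) = ∑ x : ι, ∑ y : ι, g x y :=
      fun f g h => Finset.sum_congr rfl fun x _ => Finset.sum_congr rfl fun y _ => h x y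
    rw [sc (fun x i => α (b none) * β (b none) * (P (b.coord (some x)) (b.coord (some i)) * ψ x * ψ i))
          (fun x i => P (b.coord (some x)) (b.coord (some i)) * ψ x * ψ i * (α (b none) * β (b none)))
          (fun x i => by ring),
        sc (fun x i => α (b (some x)) * β (b none) * (P (b.coord (some x)) (b.coord (some i)) * ψ i))
          (fun x i => P (b.coord (some x)) (b.coord (some i)) * ψ i * (α (b (some x)) * β (b none)))
          (fun x i => by ring),
        sc (fun x i => α (b none) * β (b (some x)) * (P (b.coord (some x)) (b.coord (some i)) * ψ i))
          (fun x i => P (b.coord (some x)) (b.coord (some i)) * ψ i * (α (b none) * β (b (some x))))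
          (fun x i => by ring),
        sc (fun x i => α (b (some x)) * β (b (some i)) * P (b.coord (some x)) (b.coord (some i)))
          (fun x i => P (b.coord (some x)) (b.coord (some i)) * α (b (some x)) * β (b (some i)))
          (fun x i => by ring)]
    ring
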